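/- Let G be a group and N a normal subgroup of G such that N is isomorphic (as a group) to FreeGroup (Fin 2) and N has finite index in G. Let Z denote the center of G and π : G → G ⧸ Z the quotient map. Then π restricted to N is injective, and the image π(N) is a subgroup of finite index of G ⧸ Z which is isomorphic to FreeGroup (Fin 2). -/

import Mathlib

open FreeGroup in
private lemma aux_reduce_cons {α : Type*} [DecidableEq α] {L : List (α × Bool)} {c : α × Bool}
    (hL : reduce L = L) (hh : L.head? ≠ some (c.1, !c.2)) :
    reduce (c :: L) = c :: L := by
  rw [FreeGroup.reduce.cons, hL]
  cases L with
  | nil => rfl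
  | cons hd tl =>
    simp only [List.casesOn]
    rw [if_neg]
    rintro ⟨h1, h2⟩
    apply hh
    simp only [List.head?_cons, Option.some.injEq]
    cases hd with
    | mk a b => simp_all

open FreeGroup in
private lemma aux_reduce_concat {α : Type*} [DecidableEq α] {L : List (α × Bool)} {c : α × Bool}
    (hL : reduce L = L) (hh : L.getLast? ≠ some (c.1, !c.2)) :
    reduce (L ++ [c]) = L ++ [c] := by
  have h1 : invRev (L ++ [c]) = (c.1, !c.2) :: invRev L := by
    simp [invRev]
  have h2 : reduce (invRev L) = invRev L := by
    rw [reduce_invRev, hL]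
  have hmap : (invRev L).head? = (L.getLast?).map (fun p => (p.1, !p.2)) := by
    simp [invRev, List.head?_reverse, List.getLast?_map]
  have hh2 : (invRev L).head? ≠ some ((c.1, !c.2).1, !(c.1, !c.2).2) := by
    rw [hmap]
    simp only [Bool.not_not]
    intro hcon
    obtain ⟨p, hp, hpe⟩ := Option.map_eq_some_iff.mp hcon
    apply hh
    rw [hp]
    cases p with
    | mk p1 p2 =>
      cases c with
      | mk c1 c2 => simp_all [Prod.ext_iff]
  have := aux_reduce_cons (c := (c.1, !c.2)) h2 hh2
  have hkey : reduce (invRev (L ++ [c])) = invRev (L ++ [c]) := by rw [h1, this]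
  have := congrArg invRev hkey
  rwa [← reduce_invRev, invRev_invRev] at this

private lemma aux_list_append_singleton {α : Type*} :
    ∀ (l : List α) (a : α), l ++ [a] = a :: l → ∀ x ∈ l, x = a := by
  intro l
  induction l with
  | nil => intro a _ x hx; simp at hx
  | cons h t ih =>
    intro a heq x hx
    simp only [List.cons_append, List.cons.injEq] at heq
    obtain ⟨rfl, ht⟩ := heq
    rcases List.mem_cons.mp hx with rfl | hx
    · rfl
    · exact ih _ ht x hx

open FreeGroup in
private lemma aux_center_free2 (w : FreeGroup (Fin 2)) (h : ∀ g, w * g = g * w) : w = 1 := by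
  by_contra hw
  have hL : w.toWord ≠ [] := fun hn => hw (toWord_eq_nil_iff.mp hn)
  set L := w.toWord with hLdef
  have hred : reduce L = L := reduce_toWord w
  have hcomm : ∀ c : Fin 2 × Bool, L.head? ≠ some (c.1, !c.2) → L.getLast? ≠ some (c.1, !c.2) →
      ∀ x ∈ L, x = c := by
    intro c hh ht
    have hg : w * mk [c] = mk [c] * w := h (mk [c])
    have h1 : (w * mk [c]).toWord = L ++ [c] := by
      rw [show w * mk [c] = mk (L ++ [c]) from by
        rw [← FreeGroup.mul_mk, hLdef, mk_toWord]]
      exact aux_reduce_concat hred ht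
    have h2 : (mk [c] * w).toWord = c :: L := by
      rw [show mk [c] * w = mk (c :: L) from by
        rw [show (c : Fin 2 × Bool) :: L = [c] ++ L from rfl, ← FreeGroup.mul_mk, hLdef,
          mk_toWord]]
      exact aux_reduce_cons hred hh
    have : L ++ [c] = c :: L := by rw [← h1, ← h2, hg]
    exact aux_list_append_singleton L c this
  -- choose a letter avoiding head and last
  obtain ⟨hd, hhd⟩ := List.exists_mem_of_ne_nil L hL
  have hhead : L.head? = some (L.head hL) := List.head?_eq_head hL
  have hlast : L.getLast? = some (L.getLast hL) := List.getLast?_eq_getLast hL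
  set a := L.head hL
  set b := L.getLast hL
  have hex : ∀ a b : Fin 2 × Bool, ∃ c : Fin 2 × Bool,
      (c.1, !c.2) ≠ a ∧ (c.1, !c.2) ≠ b := by decide
  obtain ⟨c, hc1, hc2⟩ := hex a b
  have hall : ∀ x ∈ L, x = c := by
    apply hcomm c
    · rw [hhead]; intro hn; exact hc1 (Option.some.inj hn).symm
    · rw [hlast]; intro hn; exact hc2 (Option.some.inj hn).symm
  -- now use a different generator
  set k : Fin 2 := if c.1 = 0 then 1 else 0 with hk
  have hkc : k ≠ c.1 := by
    have : ∀ i : Fin 2, (if i = 0 then (1 : Fin 2) else 0) ≠ i := by decide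
    exact this c.1
  have hall2 : ∀ x ∈ L, x = (k, true) := by
    apply hcomm (k, true)
    · rw [hhead]
      intro hn
      have := hall a (List.head_mem hL)
      rw [this] at hn
      exact hkc (congrArg Prod.fst (Option.some.inj hn)).symm
    · rw [hlast]
      intro hn
      have := hall b (List.getLast_mem hL)
      rw [this] at hn
      exact hkc (congrArg Prod.fst (Option.some.inj hn)).symm
  have h1 := hall hd hhd
  have h2 := hall2 hd hhd
  rw [h1] at h2
  exact hkc (congrArg Prod.fst h2).symm

/-- If a group `G` has a normal subgroup `N` of finite index which is free of rank 2,
then the quotient map `π : G → G ⧸ center G` is injective on `N`, and the image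
`π(N)` is a finite-index subgroup of `G ⧸ center G` isomorphic to the free group
of rank 2. -/
theorem free_subgroup_injects_in_quotient_by_center
    {G : Type*} [Group G] (N : Subgroup G) [N.Normal]
    (h_free : Nonempty (N ≃* FreeGroup (Fin 2))) (h_idx : N.FiniteIndex) :
    Set.InjOn (QuotientGroup.mk' (Subgroup.center G)) (N : Set G) ∧
    (N.map (QuotientGroup.mk' (Subgroup.center G))).FiniteIndex ∧
    Nonempty ((N.map (QuotientGroup.mk' (Subgroup.center G))) ≃* FreeGroup (Fin 2)) := by
  obtain ⟨e⟩ := h_free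
  -- key: N ∩ center G = 1
  have key : ∀ z : G, z ∈ N → z ∈ Subgroup.center G → z = 1 := by
    intro z hzN hzc
    have hcen : ∀ g : FreeGroup (Fin 2), e ⟨z, hzN⟩ * g = g * e ⟨z, hzN⟩ := by
      intro g
      have : (⟨z, hzN⟩ : N) * e.symm g = e.symm g * ⟨z, hzN⟩ := by
        ext
        exact (Subgroup.mem_center_iff.mp hzc _).symm
      calc e ⟨z, hzN⟩ * g = e (⟨z, hzN⟩ * e.symm g) := by simp
        _ = e (e.symm g * ⟨z, hzN⟩) := by rw [this]
        _ = g * e ⟨z, hzN⟩ := by simp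
    have := aux_center_free2 _ hcen
    have : (⟨z, hzN⟩ : N) = 1 := e.injective (by simpa using this)
    exact congrArg Subtype.val this
  have hinj : Set.InjOn (QuotientGroup.mk' (Subgroup.center G)) (N : Set G) := by
    intro a ha b hb hab
    have : a⁻¹ * b ∈ Subgroup.center G := by
      rw [← QuotientGroup.ker_mk' (Subgroup.center G)]
      simp only [MonoidHom.mem_ker, map_mul, map_inv, hab]
      group
    have h1 : a⁻¹ * b = 1 := key _ (N.mul_mem (N.inv_mem ha) hb) this
    exact inv_mul_eq_one.mp h1
  refine ⟨hinj, ?_, ?_⟩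
  · constructor
    have hsurj : Function.Surjective (QuotientGroup.mk' (Subgroup.center G)) :=
      QuotientGroup.mk'_surjective _
    have hdvd := N.index_map_dvd (f := QuotientGroup.mk' (Subgroup.center G)) hsurj
    intro h0
    rw [h0] at hdvd
    exact h_idx.index_ne_zero (Nat.eq_zero_of_zero_dvd hdvd)
  · have hinj' : Function.Injective
        ((QuotientGroup.mk' (Subgroup.center G)).subgroupMap N) := by
      intro x y hxy
      ext
      exact hinj x.2 y.2 (congrArg Subtype.val hxy)
    have hsurj' := MonoidHom.subgroupMap_surjective (QuotientGroup.mk' (Subgroup.center G)) N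
    exact ⟨(MulEquiv.ofBijective _ ⟨hinj', hsurj'⟩).symm.trans e⟩
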